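/- Let C be a unital C*-algebra containing a projection q that is both full and properly infinite. Then the unit of C is properly infinite; that is, there exist isometries s, t ∈ C (s*s = 1 = t*t) with s*t = 0. -/

import Mathlib

/-- An element `p` of a topological ring is *full* if the closed two-sided ideal it
generates is the whole ring. -/
def IsFullElement {C : Type*} [NonUnitalNonAssocRing C] [TopologicalSpace C] (p : C) : Prop :=
  closure ((TwoSidedIdeal.span {p} : TwoSidedIdeal C) : Set C) = Set.univ

/-- Let `C` be a unital C*-algebra containing a projection `q` that is both full and
properly infinite (there are `v, w` with `v*v = q = w*w`, `qv = v`, `qw = w`,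
`v*w = 0`).  Then the unit of `C` is properly infinite: there are isometries
`s, t ∈ C` with `s*t = 0`. -/
theorem stmt9 {C : Type*} [CStarAlgebra C]
    (q : C) (hq_sa : star q = q) (hq_idem : q * q = q) (hq_full : IsFullElement q)
    (v w : C) (hv : star v * v = q) (hw : star w * w = q)
    (hqv : q * v = v) (hqw : q * w = w) (hvw : star v * w = 0) :
    ∃ s t : C, star s * s = 1 ∧ star t * t = 1 ∧ star s * t = 0 := by
  obtain hC | hC := subsingleton_or_nontrivial C
  · exact ⟨1, 1, Subsingleton.elim _ _, Subsingleton.elim _ _, Subsingleton.elim _ _⟩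
  letI := CStarAlgebra.spectralOrder C
  letI := CStarAlgebra.spectralOrderedRing C
  classical
  -- Step 1: the set of finite sums `∑ xᵢ * q * yᵢ` is an additive subgroup containing
  -- the two-sided ideal generated by `q`.
  let S : AddSubgroup C :=
  { carrier := {z | ∃ n, ∃ x y : Fin n → C, z = ∑ i, x i * q * y i}
    zero_mem' := ⟨0, ![], ![], by simp⟩
    add_mem' := by
      rintro a b ⟨n, x, y, rfl⟩ ⟨n', x', y', rfl⟩
      exact ⟨n + n', Fin.append x x', Fin.append y y', by
        rw [Fin.sum_univ_add]
        simp [Fin.append_left, Fin.append_right]⟩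
    neg_mem' := by
      rintro a ⟨n, x, y, rfl⟩
      exact ⟨n, fun i => -x i, y, by simp [Finset.sum_neg_distrib]⟩ }
  have hspan : ((TwoSidedIdeal.span {q} : TwoSidedIdeal C) : Set C) ⊆ S := by
    intro z hz
    rw [SetLike.mem_coe, TwoSidedIdeal.mem_span_iff_mem_addSubgroup_closure] at hz
    refine (AddSubgroup.closure_le S).mpr ?_ hz
    rintro z' hz'
    rw [Set.mem_mul] at hz'
    obtain ⟨a', ha', d, -, rfl⟩ := hz'
    rw [Set.mem_mul] at ha'
    obtain ⟨c, -, q', hq', rfl⟩ := ha'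
    rw [Set.mem_singleton_iff] at hq'
    subst hq'
    exact ⟨1, ![c], ![d], by simp⟩
  -- Step 2: find an invertible element of the ideal near `1`, hence write `1 = ∑ xᵢ q yᵢ`.
  have h1 : (1 : C) ∈ closure ((TwoSidedIdeal.span {q} : TwoSidedIdeal C) : Set C) := by
    rw [hq_full]; trivial
  obtain ⟨a, ha, hdist⟩ := Metric.mem_closure_iff.mp h1 1 one_pos
  have hnorm : ‖1 - a‖ < 1 := by rwa [← dist_eq_norm]
  let u : Cˣ := Units.oneSub (1 - a) hnorm
  have hu : (u : C) = a := sub_sub_cancel 1 a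
  have huinv : (↑u⁻¹ : C) * a = 1 := by rw [← hu]; exact u.inv_mul
  obtain ⟨N, x0, y0, hxy⟩ := hspan ha
  rcases N with _ | m
  · exfalso
    refine one_ne_zero (α := C) ?_
    rw [← huinv, hxy]
    simp
  let x : Fin (m + 1) → C := fun i => (↑u⁻¹ : C) * x0 i
  have hone : (1 : C) = ∑ i, x i * q * y0 i := by
    rw [← huinv, hxy, Finset.mul_sum]
    exact Finset.sum_congr rfl fun i _ => by simp [x, mul_assoc]
  -- Step 3: basic algebra of the isometries-onto-`q`.
  have hqw' : ∀ (k : ℕ) (c : C), q * c = c → q * (w ^ k * c) = w ^ k * c := by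
    intro k c hc
    cases k with
    | zero => simpa using hc
    | succ k => rw [pow_succ', mul_assoc, ← mul_assoc q w, hqw]
  have hcancel : ∀ (k : ℕ) (c : C), q * c = c → (star w) ^ k * (w ^ k * c) = c := by
    intro k
    induction k with
    | zero => intro c hc; simp
    | succ k ih =>
      intro c hc
      rw [pow_succ (star w) k, pow_succ' w k, mul_assoc (star w ^ k) (star w),
        mul_assoc w (w ^ k) c, ← mul_assoc (star w) w, hw, hqw' k c hc, ih c hc]
  have hqwv : ∀ j : ℕ, q * (w ^ j * v) = w ^ j * v := fun j => hqw' j v hqv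
  have hvwv : ∀ k : ℕ, 0 < k → star v * (w ^ k * v) = 0 := by
    intro k hk
    obtain ⟨k, rfl⟩ := Nat.exists_eq_succ_of_ne_zero hk.ne'
    rw [pow_succ', mul_assoc, ← mul_assoc (star v) w, hvw, zero_mul]
  have hkey_lt : ∀ i j : ℕ, i < j → star (w ^ i * v) * (w ^ j * v) = 0 := by
    intro i j hij
    have hsplit : w ^ j * v = w ^ i * (w ^ (j - i) * v) := by
      rw [← mul_assoc, ← pow_add, Nat.add_sub_cancel' hij.le]
    rw [star_mul, star_pow, mul_assoc, hsplit, hcancel i _ (hqwv _)]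
    exact hvwv _ (by omega)
  have hkey_gt : ∀ i j : ℕ, j < i → star (w ^ i * v) * (w ^ j * v) = 0 := by
    intro i j hij
    have := congrArg star (hkey_lt j i hij)
    rwa [star_mul, star_star, star_zero] at this
  have hkey_eq : ∀ i : ℕ, star (w ^ i * v) * (w ^ i * v) = q := by
    intro i
    rw [star_mul, star_pow, mul_assoc, hcancel i v hqv, hv]
  -- Step 4: the element `r` with `b * r = 1` and the orthogonality relations.
  set r : C := ∑ i : Fin (m + 1), (w ^ (i : ℕ) * v) * y0 i with hrdef
  set b : C := ∑ i : Fin (m + 1), x i * star (w ^ (i : ℕ) * v) with hbdef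
  have hbr : b * r = 1 := by
    rw [hrdef, hbdef, Finset.sum_mul_sum]
    have key : ∀ i j : Fin (m + 1),
        (x i * star (w ^ (i : ℕ) * v)) * ((w ^ (j : ℕ) * v) * y0 j)
          = if i = j then x i * q * y0 i else 0 := by
      intro i j
      have hassoc : (x i * star (w ^ (i : ℕ) * v)) * ((w ^ (j : ℕ) * v) * y0 j)
          = x i * (star (w ^ (i : ℕ) * v) * (w ^ (j : ℕ) * v)) * y0 j := by noncomm_ring
      rcases lt_trichotomy (i : ℕ) (j : ℕ) with h | h | h
      · rw [hassoc, hkey_lt _ _ h, if_neg (by exact fun hc => by simp [hc] at h), mul_zero,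
          zero_mul]
      · have : i = j := Fin.ext h
        subst this
        rw [hassoc, hkey_eq, if_pos rfl]
      · rw [hassoc, hkey_gt _ _ h, if_neg (by exact fun hc => by simp [hc] at h), mul_zero,
          zero_mul]
    calc ∑ i : Fin (m + 1), ∑ j : Fin (m + 1),
          (x i * star (w ^ (i : ℕ) * v)) * ((w ^ (j : ℕ) * v) * y0 j)
        = ∑ i : Fin (m + 1), ∑ j : Fin (m + 1), if i = j then x i * q * y0 i else 0 :=
          Finset.sum_congr rfl fun i _ => Finset.sum_congr rfl fun j _ => key i j
      _ = ∑ i : Fin (m + 1), x i * q * y0 i := by simp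
      _ = 1 := hone.symm
  have hqr : q * r = r := by
    rw [hrdef, Finset.mul_sum]
    refine Finset.sum_congr rfl fun i _ => ?_
    rw [← mul_assoc, hqwv]
  have horth : star r * (w ^ (m + 1) * r) = 0 := by
    have hshift : w ^ (m + 1) * r = ∑ j : Fin (m + 1), (w ^ (m + 1 + (j : ℕ)) * v) * y0 j := by
      rw [hrdef, Finset.mul_sum]
      refine Finset.sum_congr rfl fun j _ => ?_
      rw [← mul_assoc, ← mul_assoc, ← pow_add]
    rw [hshift, hrdef, star_sum, Finset.sum_mul_sum]
    refine Finset.sum_eq_zero fun i _ => Finset.sum_eq_zero fun j _ => ?_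
    have hassoc : star ((w ^ (i : ℕ) * v) * y0 i) * ((w ^ (m + 1 + (j : ℕ)) * v) * y0 j)
        = star (y0 i) * (star (w ^ (i : ℕ) * v) * (w ^ (m + 1 + (j : ℕ)) * v)) * y0 j := by
      rw [star_mul]; noncomm_ring
    rw [hassoc, hkey_lt _ _ (lt_of_lt_of_le i.isLt (Nat.le_add_right (m + 1) j)), mul_zero,
      zero_mul]
  -- Step 5: `h = r⋆r` is positive and invertible; let `g` be its inverse square root.
  set h : C := star r * r with hh
  have hh0 : 0 ≤ h := star_mul_self_nonneg r
  have hhsa : IsSelfAdjoint h := .of_nonneg hh0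
  set K : ℝ := ‖star b * b‖ with hK
  have hbb : star b * b ≤ algebraMap ℝ C K :=
    IsSelfAdjoint.le_algebraMap_norm_self (IsSelfAdjoint.star_mul_self b)
  have hconj : star r * (star b * b) * r = 1 := by
    calc star r * (star b * b) * r = star (b * r) * (b * r) := by rw [star_mul]; noncomm_ring
      _ = 1 := by rw [hbr, star_one, one_mul]
  have hsmul : star r * algebraMap ℝ C K * r = K • h := by
    rw [Algebra.algebraMap_eq_smul_one, hh]
    simp [mul_smul_comm, smul_mul_assoc]
  have hone_le : (1 : C) ≤ K • h := by
    calc (1 : C) = star r * (star b * b) * r := hconj.symm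
      _ ≤ star r * algebraMap ℝ C K * r := star_left_conjugate_le_conjugate hbb r
      _ = K • h := hsmul
  have hKh : IsUnit (K • h) := CStarAlgebra.isUnit_of_le 1 hone_le isStrictlyPositive_one
  have hhu : IsUnit h := by
    rcases hKh with ⟨U, hU⟩
    refine isUnit_iff_exists.mpr ⟨K • (↑U⁻¹ : C), ?_, ?_⟩
    · calc h * (K • (↑U⁻¹ : C)) = (K • h) * ↑U⁻¹ := by
            rw [mul_smul_comm, smul_mul_assoc]
        _ = 1 := by rw [← hU, U.mul_inv]
    · calc (K • (↑U⁻¹ : C)) * h = ↑U⁻¹ * (K • h) := by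
            rw [smul_mul_assoc, mul_smul_comm]
        _ = 1 := by rw [← hU, U.inv_mul]
  have hsp_pos : ∀ t ∈ spectrum ℝ h, 0 < t := by
    intro t ht
    refine lt_of_le_of_ne (spectrum_nonneg_of_nonneg hh0 ht) fun h0 => ?_
    exact (spectrum.zero_notMem_iff ℝ).mpr hhu (h0 ▸ ht)
  set f : ℝ → ℝ := fun t => (Real.sqrt t)⁻¹ with hf
  have hf_cont : ContinuousOn f (spectrum ℝ h) := by
    refine ContinuousOn.inv₀ Real.continuous_sqrt.continuousOn fun t ht => ?_
    exact (Real.sqrt_pos.mpr (hsp_pos t ht)).ne'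
  set g : C := cfc f h with hg
  have hg_sa : IsSelfAdjoint g := cfc_predicate f h
  have hfh_cont : ContinuousOn (fun t => f t * t) (spectrum ℝ h) :=
    hf_cont.mul continuousOn_id
  have hval : (spectrum ℝ h).EqOn (fun t => (f t * id t) * f t) (fun _ => (1 : ℝ)) := by
    intro t ht
    have h1 : 0 < t := hsp_pos t ht
    have h2 : Real.sqrt t ≠ 0 := (Real.sqrt_pos.mpr h1).ne'
    simp only [hf, id]
    field_simp
    rw [Real.sq_sqrt h1.le]
  have hghg : g * h * g = 1 := by
    have e1 : g * h * g = cfc (fun t => f t * id t) h * cfc f h := by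
      rw [cfc_mul f id h hf_cont continuousOn_id, cfc_id ℝ h, ← hg]
    rw [e1, ← cfc_mul (fun t => f t * id t) f h hfh_cont hf_cont,
      cfc_congr hval, cfc_const_one ℝ h]
  -- Step 6: the two isometries.
  have hss : star (r * g) * (r * g) = 1 := by
    rw [star_mul, hg_sa.star_eq]
    calc g * star r * (r * g) = g * (star r * r) * g := by noncomm_ring
      _ = 1 := hghg
  have hqrg : q * (r * g) = r * g := by rw [← mul_assoc, hqr]
  refine ⟨r * g, w ^ (m + 1) * (r * g), hss, ?_, ?_⟩
  · rw [star_mul (w ^ (m + 1)) (r * g), star_pow, mul_assoc,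
      hcancel (m + 1) (r * g) hqrg]
    exact hss
  · rw [star_mul, hg_sa.star_eq]
    calc g * star r * (w ^ (m + 1) * (r * g))
        = g * (star r * (w ^ (m + 1) * r)) * g := by noncomm_ring
      _ = 0 := by rw [horth, mul_zero, zero_mul]
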